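/- arXiv:1910.04399 — 2 statements merged into one kernel-verified Lean document; each statement's English description precedes it below -/
import Mathlib

section
/- For m ≥ 2, the path forest with two paths of orders m² - 2 and 2 (total order m²) is not m-burnable. -/
/-- A graph is `m`-burnable if its vertices can be covered by `m` balls of
radii `0, 1, ..., m-1`. -/
def IsBurnable {V : Type*} (G : SimpleGraph V) (m : ℕ) : Prop :=
  ∃ f : Fin m → V, ∀ v : V, ∃ i : Fin m, G.edist (f i) v ≤ (i.val : ℕ∞)

/-- The burning number of a graph: the least `k` such that the graph is `k`-burnable. -/
noncomputable def burningNumber {V : Type*} (G : SimpleGraph V) : ℕ :=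
  sInf {k : ℕ | IsBurnable G k}

/-- The path forest whose `i`-th path has `l i` vertices. -/
def pathForest {n : ℕ} (l : Fin n → ℕ) : SimpleGraph (Σ i : Fin n, Fin (l i)) where
  Adj x y := x.1 = y.1 ∧ Nat.dist x.2.val y.2.val = 1
  symm := by
    constructor
    rintro ⟨i, a⟩ ⟨j, b⟩ ⟨h1, h2⟩
    exact ⟨h1.symm, by rwa [Nat.dist_comm]⟩
  loopless := by
    constructor
    rintro ⟨i, a⟩ ⟨_, h⟩
    simp [Nat.dist_self] at h

/-- The spider with head `none` and arms of lengths `l 0, ..., l (n-1)`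
(arm lengths count vertices excluding the head). -/
def spider {n : ℕ} (l : Fin n → ℕ) : SimpleGraph (Option (Σ i : Fin n, Fin (l i))) where
  Adj x y :=
    match x, y with
    | none, none => False
    | none, some b => b.2.val = 0
    | some a, none => a.2.val = 0
    | some a, some b => a.1 = b.1 ∧ Nat.dist a.2.val b.2.val = 1
  symm := by
    constructor
    rintro (_ | ⟨i, a⟩) (_ | ⟨j, b⟩) h <;> simp_all [Nat.dist_comm]

  loopless := by
    constructor
    rintro (_ | ⟨i, a⟩) h <;> simp_all [Nat.dist_self]
lemma pf_walk {n : ℕ} {l : Fin n → ℕ} {x y : Σ i : Fin n, Fin (l i)}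
    (p : (pathForest l).Walk x y) : x.1 = y.1 ∧ Nat.dist x.2.val y.2.val ≤ p.length := by
  induction p with
  | nil => simp [Nat.dist_self]
  | @cons a b c h p ih =>
    obtain ⟨h1, h2⟩ := id h
    refine ⟨h1.trans ih.1, ?_⟩
    have := Nat.dist.triangle_inequality a.2.val b.2.val c.2.val
    have := ih.2
    simp only [SimpleGraph.Walk.length_cons]
    omega

lemma pf_edist {n : ℕ} {l : Fin n → ℕ} {x y : Σ i : Fin n, Fin (l i)} {k : ℕ}
    (h : (pathForest l).edist x y ≤ (k : ℕ∞)) :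
    x.1 = y.1 ∧ Nat.dist x.2.val y.2.val ≤ k := by
  have hne : (pathForest l).edist x y ≠ ⊤ := fun ht => by simp [ht] at h
  obtain ⟨p, hp⟩ := SimpleGraph.exists_walk_of_edist_ne_top hne
  obtain ⟨h1, h2⟩ := pf_walk p
  refine ⟨h1, h2.trans ?_⟩
  have : (p.length : ℕ∞) ≤ (k : ℕ∞) := hp ▸ h
  exact_mod_cast this

lemma sum_odds (m : ℕ) : ∑ i ∈ Finset.range m, (2 * i + 1) = m ^ 2 := by
  induction m with
  | zero => simp
  | succ n ih => rw [Finset.sum_range_succ, ih]; ring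


/-- The path forest with two paths of orders `m² - 2` and `2` is not `m`-burnable. -/
theorem stmt10 (m : ℕ) (hm : 2 ≤ m) :
    ¬ IsBurnable (pathForest (fun i : Fin 2 => if i.val = 0 then m ^ 2 - 2 else 2)) m := by
  classical
  rintro ⟨f, hf⟩
  set l : Fin 2 → ℕ := fun i => if i.val = 0 then m ^ 2 - 2 else 2 with hl
  have hl0 : l 0 = m ^ 2 - 2 := by simp [hl]
  have hl1 : l 1 = 2 := by simp [hl]
  have hm2 : 4 ≤ m ^ 2 := by nlinarith
  have cov : ∀ v : Σ i : Fin 2, Fin (l i),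
      ∃ i : Fin m, (f i).1 = v.1 ∧ Nat.dist (f i).2.val v.2.val ≤ i.val := by
    intro v; obtain ⟨i, hi⟩ := hf v; exact ⟨i, pf_edist hi⟩
  by_cases hA : ∃ i : Fin m, (f i).1 = 1 ∧ 1 ≤ i.val
  · obtain ⟨i₀, hi₀1, hi₀v⟩ := hA
    choose g hg1 hg2 using fun a : Fin (l 0) => cov ⟨0, a⟩
    have hgne : ∀ a, g a ≠ i₀ := by
      intro a h
      have h0 : (f (g a)).fst = 0 := hg1 a
      rw [h, hi₀1] at h0
      exact absurd h0 (by decide)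
    have hcard : (Finset.univ : Finset (Fin (l 0))).card =
        ∑ i ∈ Finset.univ.erase i₀,
          (Finset.univ.filter (fun a : Fin (l 0) => g a = i)).card :=
      Finset.card_eq_sum_card_fiberwise
        (fun a _ => Finset.mem_erase.mpr ⟨hgne a, Finset.mem_univ _⟩)
    have hball : ∀ i : Fin m,
        (Finset.univ.filter (fun a : Fin (l 0) => g a = i)).card ≤ 2 * i.val + 1 := by
      intro i
      refine le_trans (Finset.card_le_card_of_injOn
        (fun a : Fin (l 0) => a.val + i.val - (f i).2.val) ?_ ?_)
        (le_of_eq (Finset.card_range (2 * i.val + 1)))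
      · intro a ha
        rw [Finset.mem_coe, Finset.mem_filter] at ha
        have h2 := hg2 a
        rw [ha.2] at h2
        simp only [Nat.dist] at h2
        simp only [Finset.mem_coe, Finset.mem_range]
        omega
      · intro a ha b hb hab
        rw [Finset.mem_coe, Finset.mem_filter] at ha hb
        have h2a := hg2 a; rw [ha.2] at h2a
        have h2b := hg2 b; rw [hb.2] at h2b
        simp only [Nat.dist] at h2a h2b
        simp only at hab
        exact Fin.ext (by omega)
    have hsum : ∑ i ∈ Finset.univ.erase i₀, (2 * i.val + 1) + (2 * i₀.val + 1)
        = m ^ 2 := by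
      rw [Finset.sum_erase_add _ _ (Finset.mem_univ _),
        Fin.sum_univ_eq_sum_range (fun i => 2 * i + 1) m, sum_odds]
    have h1 : l 0 ≤ ∑ i ∈ Finset.univ.erase i₀, (2 * i.val + 1) := by
      calc l 0 = (Finset.univ : Finset (Fin (l 0))).card := by
            rw [Finset.card_univ, Fintype.card_fin]
        _ = _ := hcard
        _ ≤ _ := Finset.sum_le_sum (fun i _ => hball i)
    omega
  · push_neg at hA
    have key : ∀ b : Fin (l 1), ∃ i : Fin m, i.val = 0 ∧ f i = ⟨1, b⟩ := by
      intro b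
      obtain ⟨i, h1, h2⟩ := cov ⟨1, b⟩
      have hz : i.val = 0 := by have := hA i h1; omega
      refine ⟨i, hz, ?_⟩
      rw [hz] at h2
      have hval : (f i).2.val = b.val := by simp only [Nat.dist] at h2; omega
      rcases hFi : f i with ⟨j, x⟩
      rw [hFi] at h1 hval
      simp only at h1 hval
      subst h1
      cases Fin.ext hval
      rfl
    obtain ⟨i, hi0, hfi⟩ := key ⟨0, by omega⟩
    obtain ⟨j, hj0, hfj⟩ := key ⟨1, by omega⟩
    have : i = j := Fin.ext (hi0.trans hj0.symm)
    rw [this, hfj] at hfi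
    simp at hfi
end

section
/- Let n ≥ 2 and let T be a path forest with n paths of total order at most 3n - 2. Then T is n-burnable unless the smallest path order of T equals two. -/
private lemma nat_dist_def (x y : ℕ) : Nat.dist x y = x - y + (y - x) := rfl

private lemma pf_aux (k : ℕ) : ∀ {n : ℕ} (l : Fin n → ℕ) (i : Fin n) (a b : Fin (l i)),
    b.val = a.val + k → (pathForest l).edist ⟨i, a⟩ ⟨i, b⟩ ≤ (k : ℕ∞) := by
  induction k with
  | zero =>
    intro n l i a b h
    have : a = b := Fin.ext (by omega)
    subst this; simp
  | succ k ih =>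
    intro n l i a b h
    have ha1 : a.val + 1 < l i := by have := b.isLt; omega
    set a' : Fin (l i) := ⟨a.val + 1, ha1⟩ with ha'
    have hadj : (pathForest l).Adj ⟨i, a⟩ ⟨i, a'⟩ := by
      refine ⟨rfl, ?_⟩
      rw [nat_dist_def]; simp [ha']
    have h1 : (pathForest l).edist ⟨i, a⟩ ⟨i, a'⟩ ≤ 1 := by
      have := SimpleGraph.edist_le (SimpleGraph.Walk.cons hadj SimpleGraph.Walk.nil)
      simpa using this
    have h2 : (pathForest l).edist ⟨i, a'⟩ ⟨i, b⟩ ≤ (k : ℕ∞) := ih l i a' b (by simp [ha']; omega)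
    calc (pathForest l).edist ⟨i, a⟩ ⟨i, b⟩
        ≤ (pathForest l).edist ⟨i, a⟩ ⟨i, a'⟩ + (pathForest l).edist ⟨i, a'⟩ ⟨i, b⟩ :=
          SimpleGraph.edist_triangle
      _ ≤ 1 + (k : ℕ∞) := add_le_add h1 h2
      _ = ((k + 1 : ℕ) : ℕ∞) := by push_cast; ring

private lemma pf_edist_s11 {n : ℕ} (l : Fin n → ℕ) (i : Fin n) (a b : Fin (l i)) :
    (pathForest l).edist ⟨i, a⟩ ⟨i, b⟩ ≤ (Nat.dist a.val b.val : ℕ∞) := by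
  rcases le_total a.val b.val with h | h
  · have := pf_aux (b.val - a.val) l i a b (by omega)
    refine this.trans ?_
    exact Nat.cast_le.mpr (by rw [nat_dist_def]; omega)
  · rw [SimpleGraph.edist_comm]
    have := pf_aux (a.val - b.val) l i b a (by omega)
    refine this.trans ?_
    exact Nat.cast_le.mpr (by rw [nat_dist_def]; omega)

private lemma pf_key {n : ℕ} (hn : 2 ≤ n) (m : Fin n → ℕ) (hm : Monotone m)
    (h1 : ∀ i, 1 ≤ m i) (h0 : m ⟨0, by omega⟩ = 1) (hsum : ∑ i, m i ≤ 3 * n - 2) :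
    ∀ j : Fin n, m j ≤ 2 * j.val + 1 := by
  by_contra hc
  push_neg at hc
  obtain ⟨j, hj⟩ := hc
  have hj0 : 1 ≤ j.val := by
    by_contra h
    have hjv : j.val = 0 := by omega
    have hmj : m j = 1 := by
      have : j = ⟨0, by omega⟩ := Fin.ext hjv
      rw [this, h0]
    omega
  have hdisj : Disjoint (Finset.Iio j) (Finset.Ici j) := by
    rw [Finset.disjoint_left]
    intro x hx hx'
    simp only [Finset.mem_Iio] at hx
    simp only [Finset.mem_Ici] at hx'
    exact absurd hx (not_lt.mpr hx')
  have huniv : Finset.Iio j ∪ Finset.Ici j = Finset.univ := by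
    ext x
    simp only [Finset.mem_union, Finset.mem_Iio, Finset.mem_Ici, Finset.mem_univ, iff_true]
    exact lt_or_ge x j
  have hsplit : ∑ i ∈ Finset.Iio j, m i + ∑ i ∈ Finset.Ici j, m i = ∑ i, m i := by
    rw [← Finset.sum_union hdisj, huniv]
  have hlow1 : j.val ≤ ∑ i ∈ Finset.Iio j, m i := by
    have := Finset.card_nsmul_le_sum (Finset.Iio j) m 1 (fun i _ => h1 i)
    rw [Fin.card_Iio] at this
    simpa using this
  have hlow2 : (n - j.val) * (2 * j.val + 2) ≤ ∑ i ∈ Finset.Ici j, m i := by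
    have := Finset.card_nsmul_le_sum (Finset.Ici j) m (2 * j.val + 2)
      (fun i hi => le_trans (by omega) (hm (Finset.mem_Ici.mp hi)))
    rw [Fin.card_Ici] at this
    simpa using this
  have hjn : j.val < n := j.isLt
  obtain ⟨k', hk'⟩ : ∃ k', j.val = 1 + k' := ⟨j.val - 1, by omega⟩
  obtain ⟨c', hc'⟩ : ∃ c', n - j.val = 1 + c' := ⟨n - j.val - 1, by omega⟩
  have htot : j.val + (n - j.val) * (2 * j.val + 2) ≤ 3 * n - 2 :=
    le_trans (le_trans (add_le_add hlow1 hlow2) hsplit.le) hsum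
  have hn3 : n = 2 + k' + c' := by omega
  rw [hc', hk', hn3] at htot
  have h32 : 3 * (2 + k' + c') - 2 = 4 + 3 * k' + 3 * c' := by omega
  rw [h32] at htot
  nlinarith [Nat.zero_le (c' * k'), htot]

/-- A path forest with `n ≥ 2` paths of total order at most `3n - 2` is `n`-burnable
unless its smallest path order equals two. -/
theorem stmt11 (n : ℕ) (hn : 2 ≤ n) (l : Fin n → ℕ)
    (hl : ∀ i, 1 ≤ l i)
    (horder : ∑ i, l i ≤ 3 * n - 2)
    (hexc : ¬ ((∀ i, 2 ≤ l i) ∧ ∃ i, l i = 2)) :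
    IsBurnable (pathForest l) n := by
  have hone : ∃ i, l i = 1 := by
    by_contra h
    push_neg at h
    have h2 : ∀ i, 2 ≤ l i := fun i => by have := hl i; have := h i; omega
    have h3 : ∀ i, l i ≠ 2 := fun i hi => hexc ⟨h2, ⟨i, hi⟩⟩
    have h4 : ∀ i, 3 ≤ l i := fun i => by have := h2 i; have := h3 i; omega
    have : 3 * n ≤ ∑ i, l i := by
      calc 3 * n = ∑ _i : Fin n, 3 := by simp [mul_comm]
      _ ≤ ∑ i, l i := Finset.sum_le_sum (fun i _ => h4 i)
    omega
  obtain ⟨i₀, hi₀⟩ := hone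
  set σ := Tuple.sort l with hσ
  set m := l ∘ σ with hm
  have hmono : Monotone m := Tuple.monotone_sort l
  have hm1 : ∀ j, 1 ≤ m j := fun j => hl _
  have hsum : ∑ j, m j ≤ 3 * n - 2 := by
    rw [hm, show ∑ j, (l ∘ σ) j = ∑ i, l i from Equiv.sum_comp σ l]
    exact horder
  have hm0 : m ⟨0, by omega⟩ = 1 := by
    have ha : m ⟨0, by omega⟩ ≤ m (σ.symm i₀) := hmono (by simp [Fin.le_def])
    have hb : m (σ.symm i₀) = 1 := by simp [hm, hi₀]
    have := hm1 ⟨0, by omega⟩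
    omega
  have hkey : ∀ j : Fin n, m j ≤ 2 * j.val + 1 := pf_key hn m hmono hm1 hm0 hsum
  refine ⟨fun j => ⟨σ j, ⟨min j.val (l (σ j) - 1), by have := hl (σ j); omega⟩⟩, ?_⟩
  rintro ⟨i, a⟩
  obtain ⟨j, rfl⟩ : ∃ j, σ j = i := ⟨σ.symm i, σ.apply_symm_apply i⟩
  refine ⟨j, ?_⟩
  refine le_trans (pf_edist_s11 l (σ j) _ a) ?_
  have hLa := a.isLt
  have hL1 := hl (σ j)
  have hL : l (σ j) ≤ 2 * j.val + 1 := hkey j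
  exact Nat.cast_le.mpr (by rw [nat_dist_def]; simp only; omega)
end
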